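/- Let A →(i_*) B →(j^*) C be an exact triple of triangulated categories with duality, with the self-dual t-structure on B glued from self-dual t-structures on A and C, and hearts A⁰, B⁰, C⁰. If β : b → Db is an anisotropic symmetric form in B⁰ and γ : c → Dc is an anisotropic symmetric form in C⁰, then the intermediate restriction i^{!*}β (a form in A⁰) and the intermediate extension j_{!*}γ (a form in B⁰) are also anisotropic. -/

import Mathlib

open CategoryTheory CategoryTheory.Limits

universe v u v₁ u₁ v₂ u₂ v₃ u₃

/-- A (contravariant) duality on a preadditive category: a triple `(D, χ)` where `D` is an
additive contravariant endofunctor and `χ : id → D ∘ D^op` is a natural isomorphism such that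
`D χ_a ∘ χ_{D a} = id`. -/
structure PreDuality (A : Type u) [Category.{v} A] [Preadditive A] where
  obj : A → A
  map : ∀ {X Y : A}, (X ⟶ Y) → (obj Y ⟶ obj X)
  map_id : ∀ X : A, map (𝟙 X) = 𝟙 (obj X)
  map_comp : ∀ {X Y Z : A} (f : X ⟶ Y) (g : Y ⟶ Z), map (f ≫ g) = map g ≫ map f
  map_add : ∀ {X Y : A} (f g : X ⟶ Y), map (f + g) = map f + map g
  χ : ∀ X : A, X ⟶ obj (obj X)
  χ_iso : ∀ X : A, IsIso (χ X)
  χ_natural : ∀ {X Y : A} (f : X ⟶ Y), f ≫ χ Y = χ X ≫ map (map f)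
  triangle : ∀ X : A, χ (obj X) ≫ map (χ X) = 𝟙 (obj X)

namespace PreDuality

variable {A : Type u} [Category.{v} A] [Preadditive A] (𝒟 : PreDuality A)

lemma map_zero (X Y : A) : 𝒟.map (0 : X ⟶ Y) = 0 := by
  have h := 𝒟.map_add (0 : X ⟶ Y) 0
  rw [add_zero] at h
  exact (add_eq_left).mp h.symm

lemma map_neg {X Y : A} (f : X ⟶ Y) : 𝒟.map (-f) = -𝒟.map f := by
  have h := 𝒟.map_add f (-f)
  rw [add_neg_cancel, 𝒟.map_zero] at h
  exact eq_neg_of_add_eq_zero_right h.symm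

/-- The "opposite-sign" duality `(D, -χ)`; its symmetric forms are the antisymmetric forms
for `(D, χ)`. -/
def neg : PreDuality A where
  obj := 𝒟.obj
  map := 𝒟.map
  map_id := 𝒟.map_id
  map_comp := 𝒟.map_comp
  map_add := 𝒟.map_add
  χ X := -𝒟.χ X
  χ_iso X := by
    have := 𝒟.χ_iso X
    exact ⟨⟨-(inv (𝒟.χ X)), by simp, by simp⟩⟩
  χ_natural f := by
    rw [Preadditive.comp_neg, Preadditive.neg_comp, 𝒟.χ_natural]
  triangle X := by
    rw [𝒟.map_neg, Preadditive.neg_comp, Preadditive.comp_neg, neg_neg, 𝒟.triangle]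

end PreDuality

section Forms

variable {A : Type u} [Category.{v} A] [Preadditive A]

/-- A symmetric bilinear form in a category with duality: a morphism `β : b ⟶ D b`
with `β = D β ∘ χ_b`.  (Antisymmetric forms are symmetric forms for `𝒟.neg`.) -/
structure SymmForm (𝒟 : PreDuality A) where
  carrier : A
  form : carrier ⟶ 𝒟.obj carrier
  symm : form = 𝒟.χ carrier ≫ 𝒟.map form

namespace SymmForm

variable {𝒟 : PreDuality A}

/-- A form is non-degenerate if the underlying morphism is an isomorphism. -/
def Nondeg (β : SymmForm 𝒟) : Prop := IsIso β.form

/-- The restriction `β|_f = D f ∘ β ∘ f` of a symmetric form along a morphism `f`. -/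
def restrict (β : SymmForm 𝒟) {a : A} (f : a ⟶ β.carrier) : SymmForm 𝒟 where
  carrier := a
  form := f ≫ β.form ≫ 𝒟.map f
  symm := by
    have h : 𝒟.map (f ≫ β.form ≫ 𝒟.map f)
        = 𝒟.map (𝒟.map f) ≫ 𝒟.map β.form ≫ 𝒟.map f := by
      rw [𝒟.map_comp, 𝒟.map_comp, Category.assoc]
    rw [h, ← Category.assoc (𝒟.χ a), ← 𝒟.χ_natural f, Category.assoc,
      ← Category.assoc (𝒟.χ β.carrier), ← β.symm]

lemma restrict_symm (β : SymmForm 𝒟) {a : A} (f : a ⟶ β.carrier) :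
    f ≫ β.form ≫ 𝒟.map f = 𝒟.χ a ≫ 𝒟.map (f ≫ β.form ≫ 𝒟.map f) :=
  (β.restrict f).symm

/-- Orthogonal direct sum of symmetric forms. -/
noncomputable def orthSum [HasBinaryBiproducts A] (β₁ β₂ : SymmForm 𝒟) : SymmForm 𝒟 where
  carrier := β₁.carrier ⊞ β₂.carrier
  form := biprod.desc (β₁.form ≫ 𝒟.map biprod.fst) (β₂.form ≫ 𝒟.map biprod.snd)
  symm := by
    apply biprod.hom_ext'
    · rw [biprod.inl_desc]
      have h1 : biprod.inl ≫ 𝒟.χ (β₁.carrier ⊞ β₂.carrier)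
          = 𝒟.χ β₁.carrier ≫ 𝒟.map (𝒟.map (biprod.inl : β₁.carrier ⟶ _)) :=
        𝒟.χ_natural _
      rw [← Category.assoc, h1, Category.assoc, ← 𝒟.map_comp]
      have h2 : biprod.desc (β₁.form ≫ 𝒟.map biprod.fst) (β₂.form ≫ 𝒟.map biprod.snd) ≫
          𝒟.map (biprod.inl : β₁.carrier ⟶ _) = biprod.fst ≫ β₁.form := by
        apply biprod.hom_ext'
        · rw [← Category.assoc, biprod.inl_desc, Category.assoc, ← 𝒟.map_comp,
            biprod.inl_fst, 𝒟.map_id, Category.comp_id, ← Category.assoc, biprod.inl_fst,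
            Category.id_comp]
        · rw [← Category.assoc, biprod.inr_desc, Category.assoc, ← 𝒟.map_comp,
            biprod.inl_snd, 𝒟.map_zero, Limits.comp_zero, ← Category.assoc, biprod.inr_fst,
            Limits.zero_comp]
      rw [h2, 𝒟.map_comp, ← Category.assoc, ← β₁.symm]
    · rw [biprod.inr_desc]
      have h1 : biprod.inr ≫ 𝒟.χ (β₁.carrier ⊞ β₂.carrier)
          = 𝒟.χ β₂.carrier ≫ 𝒟.map (𝒟.map (biprod.inr : β₂.carrier ⟶ _)) :=
        𝒟.χ_natural _
      rw [← Category.assoc, h1, Category.assoc, ← 𝒟.map_comp]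
      have h2 : biprod.desc (β₁.form ≫ 𝒟.map biprod.fst) (β₂.form ≫ 𝒟.map biprod.snd) ≫
          𝒟.map (biprod.inr : β₂.carrier ⟶ _) = biprod.snd ≫ β₂.form := by
        apply biprod.hom_ext'
        · rw [← Category.assoc, biprod.inl_desc, Category.assoc, ← 𝒟.map_comp,
            biprod.inr_fst, 𝒟.map_zero, Limits.comp_zero, ← Category.assoc, biprod.inl_snd,
            Limits.zero_comp]
        · rw [← Category.assoc, biprod.inr_desc, Category.assoc, ← 𝒟.map_comp,
            biprod.inr_snd, 𝒟.map_id, Category.comp_id, ← Category.assoc, biprod.inr_snd,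
            Category.id_comp]
      rw [h2, 𝒟.map_comp, ← Category.assoc, ← β₂.symm]

end SymmForm

/-- Two symmetric forms are isometric if they correspond under an isomorphism of the
underlying objects. -/
def Isometric' {𝒟 : PreDuality A} (α β : SymmForm 𝒟) : Prop :=
  ∃ f : α.carrier ⟶ β.carrier, IsIso f ∧ α.form = f ≫ β.form ≫ 𝒟.map f

/-- A subobject (given by a monomorphism `i`) is isotropic for `β` if `β|_i = 0`. -/
def IsIsotropic {𝒟 : PreDuality A} (β : SymmForm 𝒟) {a : A} (i : a ⟶ β.carrier) : Prop :=
  Mono i ∧ i ≫ β.form ≫ 𝒟.map i = 0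

/-- A symmetric form is anisotropic if it has no non-zero isotropic subobject. -/
def Anisotropic {𝒟 : PreDuality A} (β : SymmForm 𝒟) : Prop :=
  ∀ (a : A) (i : a ⟶ β.carrier), Mono i → i ≫ β.form ≫ 𝒟.map i = 0 → IsZero a

end Forms

section AbelianDuality

variable {A : Type u} [Category.{v} A] [Abelian A]

/-- An exact duality on an abelian category: a duality whose underlying additive
contravariant functor is exact, i.e. takes cokernels to kernels and kernels to cokernels. -/
structure Duality (A : Type u) [Category.{v} A] [Abelian A] extends PreDuality A where
  dualCokernelIsKernel : ∀ {X Y : A} (f : X ⟶ Y),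
    IsLimit (KernelFork.ofι (f := toPreDuality.map f) (toPreDuality.map (cokernel.π f))
      (by rw [← toPreDuality.map_comp, cokernel.condition, toPreDuality.map_zero]))
  dualKernelIsCokernel : ∀ {X Y : A} (f : X ⟶ Y),
    IsColimit (CokernelCofork.ofπ (f := toPreDuality.map f) (toPreDuality.map (kernel.ι f))
      (by rw [← toPreDuality.map_comp, kernel.condition, toPreDuality.map_zero]))

/-- Abbreviation for the underlying duality data. -/
abbrev Duality.P (𝒟 : Duality A) : PreDuality A := 𝒟.toPreDuality

/-- The negative `(D, -χ)` of an exact duality. -/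
def Duality.neg (𝒟 : Duality A) : Duality A where
  toPreDuality := 𝒟.toPreDuality.neg
  dualCokernelIsKernel := 𝒟.dualCokernelIsKernel
  dualKernelIsCokernel := 𝒟.dualKernelIsCokernel

namespace SymmForm

variable {𝒟 : Duality A} (β : SymmForm 𝒟.P) {a : A} (i : a ⟶ β.carrier)
  (hiso : i ≫ β.form ≫ 𝒟.P.map i = 0)

/-- The factorisation of an isotropic `i : a ⟶ b` through the orthogonal complement
`a^⊥ = ker (D i ∘ β)`. -/
noncomputable def perpLift : a ⟶ kernel (β.form ≫ 𝒟.P.map i) :=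
  kernel.lift _ i hiso

lemma reduce_h1 :
    perpLift β i hiso ≫ (kernel.ι (β.form ≫ 𝒟.P.map i) ≫ β.form ≫
      𝒟.P.map (kernel.ι (β.form ≫ 𝒟.P.map i))) = 0 := by
  have hpcι : perpLift β i hiso ≫ kernel.ι (β.form ≫ 𝒟.P.map i) = i := kernel.lift_ι _ _ _
  have e1 : i ≫ β.form = 𝒟.P.χ a ≫ 𝒟.P.map (β.form ≫ 𝒟.P.map i) := by
    conv_lhs => rw [β.symm]
    rw [← Category.assoc, 𝒟.P.χ_natural i, Category.assoc, ← 𝒟.P.map_comp]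
  rw [← Category.assoc, hpcι, ← Category.assoc, e1, Category.assoc, ← 𝒟.P.map_comp,
    kernel.condition, 𝒟.P.map_zero, Limits.comp_zero]

/-- The degenerate form `β` restricted to `a^⊥`, descended to `a^⊥/a`. -/
noncomputable def reducePre :
    cokernel (perpLift β i hiso) ⟶
      𝒟.P.obj (kernel (β.form ≫ 𝒟.P.map i)) :=
  cokernel.desc _ _ (reduce_h1 β i hiso)

lemma perpLift_ι :
    perpLift β i hiso ≫ kernel.ι (β.form ≫ 𝒟.P.map i) = i :=
  kernel.lift_ι _ _ _

lemma reduce_h2 :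
    reducePre β i hiso ≫ 𝒟.P.map (perpLift β i hiso) = 0 := by
  rw [← cancel_epi (cokernel.π (perpLift β i hiso)), Limits.comp_zero, ← Category.assoc,
    reducePre, cokernel.π_desc, Category.assoc, Category.assoc, ← 𝒟.P.map_comp,
    perpLift_ι]
  exact kernel.condition _

/-- Isotropic reduction `β/a` of a symmetric form along an isotropic morphism `i : a ⟶ b`:
the induced symmetric form on `a^⊥/a`, where `a^⊥ = ker (D i ∘ β)`. -/
noncomputable def reduce : SymmForm 𝒟.P where
  carrier := cokernel (perpLift β i hiso)
  form := (KernelFork.IsLimit.lift' (𝒟.dualCokernelIsKernel (perpLift β i hiso))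
    (reducePre β i hiso) (reduce_h2 β i hiso)).1
  symm := by
    set φv := (KernelFork.IsLimit.lift' (𝒟.dualCokernelIsKernel (perpLift β i hiso))
      (reducePre β i hiso) (reduce_h2 β i hiso)).1 with hv
    have hφ : φv ≫ 𝒟.P.map (cokernel.π (perpLift β i hiso)) = reducePre β i hiso :=
      (KernelFork.IsLimit.lift' (𝒟.dualCokernelIsKernel (perpLift β i hiso))
        (reducePre β i hiso) (reduce_h2 β i hiso)).2
    have hπs : cokernel.π (perpLift β i hiso) ≫ reducePre β i hiso
        = kernel.ι (β.form ≫ 𝒟.P.map i) ≫ β.form ≫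
            𝒟.P.map (kernel.ι (β.form ≫ 𝒟.P.map i)) :=
      cokernel.π_desc _ _ _
    apply Fork.IsLimit.hom_ext (𝒟.dualCokernelIsKernel (perpLift β i hiso))
    show φv ≫ 𝒟.P.map (cokernel.π (perpLift β i hiso)) =
        (𝒟.P.χ _ ≫ 𝒟.P.map φv) ≫ 𝒟.P.map (cokernel.π (perpLift β i hiso))
    have key : 𝒟.P.map (𝒟.P.map (cokernel.π (perpLift β i hiso))) ≫ 𝒟.P.map φv ≫
        𝒟.P.map (cokernel.π (perpLift β i hiso))
        = 𝒟.P.map (kernel.ι (β.form ≫ 𝒟.P.map i) ≫ β.form ≫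
            𝒟.P.map (kernel.ι (β.form ≫ 𝒟.P.map i))) := by
      rw [← 𝒟.P.map_comp, ← 𝒟.P.map_comp, Category.assoc, hφ, hπs]
    rw [hφ, ← cancel_epi (cokernel.π (perpLift β i hiso)), hπs, Category.assoc,
      ← Category.assoc (cokernel.π (perpLift β i hiso)) (𝒟.P.χ _),
      𝒟.P.χ_natural (cokernel.π (perpLift β i hiso)), Category.assoc, key]
    exact β.restrict_symm _

/-- Reduction of a symmetric form by the kernel: the induced non-degenerate form on the
image of `β`. -/
noncomputable def reduceKernel : SymmForm 𝒟.P :=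
  β.reduce (kernel.ι β.form) (by rw [← Category.assoc, kernel.condition, Limits.zero_comp])

lemma form_comp_map_kernel : β.form ≫ 𝒟.P.map (kernel.ι β.form) = 0 := by
  have h := congrArg (fun g => 𝒟.P.χ β.carrier ≫ 𝒟.P.map g) (kernel.condition β.form)
  simp only [𝒟.P.map_comp, 𝒟.P.map_zero, Limits.comp_zero] at h
  rw [← Category.assoc, ← β.symm] at h
  exact h

/-- The canonical quotient map `b ⟶ im β` onto (the reduction model of) the image of `β`. -/
noncomputable def kerQuot : β.carrier ⟶ β.reduceKernel.carrier :=
  kernel.lift _ (𝟙 _) (by rw [Category.id_comp]; exact β.form_comp_map_kernel) ≫ cokernel.π _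

end SymmForm

end AbelianDuality

section Witt

variable {A : Type u} [Category.{v} A] [Preadditive A]

/-- A lagrangian of a symmetric form: an isotropic subobject `i : a ⟶ b` such that
`0 ⟶ a ⟶ b ⟶ D a ⟶ 0` (with second map `D i ∘ β`) is short exact. -/
def SymmForm.IsLagrangian [Abelian A] {𝒟 : PreDuality A} (β : SymmForm 𝒟) {a : A}
    (i : a ⟶ β.carrier) : Prop :=
  Mono i ∧ Epi (β.form ≫ 𝒟.map i) ∧
    ∃ w : i ≫ (β.form ≫ 𝒟.map i) = 0,
      (CategoryTheory.ShortComplex.mk i (β.form ≫ 𝒟.map i) w).Exact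

/-- A metabolic form: a non-degenerate symmetric form admitting a lagrangian. -/
def SymmForm.Metabolic [Abelian A] {𝒟 : PreDuality A} (β : SymmForm 𝒟) : Prop :=
  IsIso β.form ∧ ∃ (a : A) (i : a ⟶ β.carrier), β.IsLagrangian i

/-- Witt equivalence with respect to a class `M` of "metabolic" forms: stable isometry. -/
def WittEquivBy [HasBinaryBiproducts A] {𝒟 : PreDuality A} (M : SymmForm 𝒟 → Prop)
    (β₁ β₂ : SymmForm 𝒟) : Prop :=
  ∃ η₁ η₂ : SymmForm 𝒟, M η₁ ∧ M η₂ ∧ Isometric' (β₁.orthSum η₁) (β₂.orthSum η₂)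


variable (𝒟 : PreDuality A)

/-- Non-degenerate symmetric forms with carrier in a given class `P` of objects. -/
abbrev NDForm (P : A → Prop) : Type (max u v) :=
  {β : SymmForm 𝒟 // IsIso β.form ∧ P β.carrier}

/-- The subgroup of relations defining the Witt group: `[β₁ ⊕ β₂] = [β₁] + [β₂]` and
`[η] = 0` for `η` metabolic. -/
def wittRel [HasBinaryBiproducts A] (M : SymmForm 𝒟 → Prop) (P : A → Prop) :
    AddSubgroup (FreeAbelianGroup (NDForm 𝒟 P)) :=
  AddSubgroup.closure
    ({x | ∃ (β₁ β₂ : NDForm 𝒟 P) (h : IsIso (β₁.1.orthSum β₂.1).form)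
        (hP : P (β₁.1.orthSum β₂.1).carrier),
        x = FreeAbelianGroup.of (⟨β₁.1.orthSum β₂.1, h, hP⟩ : NDForm 𝒟 P)
          - FreeAbelianGroup.of β₁ - FreeAbelianGroup.of β₂} ∪
     {x | ∃ (β₁ β₂ : NDForm 𝒟 P), Isometric' β₁.1 β₂.1 ∧
        x = FreeAbelianGroup.of β₁ - FreeAbelianGroup.of β₂} ∪
     {x | ∃ η : NDForm 𝒟 P, M η.1 ∧ x = FreeAbelianGroup.of η})

/-- The Witt group of non-degenerate symmetric forms (with carrier in `P`), modulo metabolic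
forms `M`, presented as the quotient of the free abelian group on non-degenerate symmetric
forms by the sum, isometry and metabolic relations. -/
def WittGroup [HasBinaryBiproducts A] (M : SymmForm 𝒟 → Prop) (P : A → Prop) :
    Type (max u v) :=
  FreeAbelianGroup (NDForm 𝒟 P) ⧸ wittRel 𝒟 M P

noncomputable instance [HasBinaryBiproducts A] (M : SymmForm 𝒟 → Prop) (P : A → Prop) :
    AddCommGroup (WittGroup 𝒟 M P) :=
  inferInstanceAs (AddCommGroup (FreeAbelianGroup (NDForm 𝒟 P) ⧸ wittRel 𝒟 M P))

/-- The Witt class of a non-degenerate symmetric form. -/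
def wittClsP [HasBinaryBiproducts A] (M : SymmForm 𝒟 → Prop) (P : A → Prop)
    (β : SymmForm 𝒟) (h : IsIso β.form) (hP : P β.carrier) : WittGroup 𝒟 M P :=
  QuotientAddGroup.mk (FreeAbelianGroup.of (⟨β, h, hP⟩ : NDForm 𝒟 P))

end Witt

section AWitt

variable {A : Type u} [Category.{v} A] [Abelian A]

/-- Witt equivalence of symmetric forms in an abelian category: stable isometry by
metabolic forms. -/
def WittEquiv {𝒟 : PreDuality A} (β₁ β₂ : SymmForm 𝒟) : Prop :=
  WittEquivBy SymmForm.Metabolic β₁ β₂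

/-- The Witt group `W(𝒜)` of an abelian category with duality. -/
def AWitt (𝒟 : Duality A) : Type (max u v) :=
  WittGroup 𝒟.P SymmForm.Metabolic (fun _ => True)

noncomputable instance (𝒟 : Duality A) : AddCommGroup (AWitt 𝒟) :=
  inferInstanceAs (AddCommGroup (WittGroup 𝒟.P SymmForm.Metabolic (fun _ => True)))

/-- The Witt class `[β] ∈ W(𝒜)` of a non-degenerate symmetric form. -/
def aCls (𝒟 : Duality A) (β : SymmForm 𝒟.P) (h : IsIso β.form) : AWitt 𝒟 :=
  wittClsP 𝒟.P SymmForm.Metabolic (fun _ => True) β h trivial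

/-- The Witt group `W₋(𝒜)` of antisymmetric forms. -/
def AWittNeg (𝒟 : Duality A) : Type (max u v) := AWitt 𝒟.neg

noncomputable instance (𝒟 : Duality A) : AddCommGroup (AWittNeg 𝒟) :=
  inferInstanceAs (AddCommGroup (AWitt 𝒟.neg))

end AWitt

section DualityFunctor

variable {A : Type u} {B : Type u₁} [Category.{v} A] [Category.{v₁} B]
  [Preadditive A] [Preadditive B]

/-- An additive functor commuting with dualities. -/
structure DualityFunctor (𝒟₁ : PreDuality A) (𝒟₂ : PreDuality B) where
  F : A ⥤ B
  additive : F.Additive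
  η : ∀ X : A, F.obj (𝒟₁.obj X) ≅ 𝒟₂.obj (F.obj X)
  η_natural : ∀ {X Y : A} (f : X ⟶ Y),
    F.map (𝒟₁.map f) ≫ (η X).hom = (η Y).hom ≫ 𝒟₂.map (F.map f)
  χ_compat : ∀ X : A,
    F.map (𝒟₁.χ X) ≫ (η (𝒟₁.obj X)).hom ≫ 𝒟₂.map ((η X).inv) = 𝒟₂.χ (F.obj X)

namespace DualityFunctor

variable {𝒟₁ : PreDuality A} {𝒟₂ : PreDuality B} (Φ : DualityFunctor 𝒟₁ 𝒟₂)

/-- The image of a symmetric form under a functor commuting with dualities. -/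
def mapForm (β : SymmForm 𝒟₁) : SymmForm 𝒟₂ where
  carrier := Φ.F.obj β.carrier
  form := Φ.F.map β.form ≫ (Φ.η β.carrier).hom
  symm := by
    have h0 : 𝒟₂.map (Φ.F.map β.form ≫ (Φ.η β.carrier).hom)
        = 𝒟₂.map (Φ.η β.carrier).hom ≫ 𝒟₂.map (Φ.F.map β.form) := 𝒟₂.map_comp _ _
    rw [h0, ← Φ.χ_compat β.carrier, Category.assoc, Category.assoc]
    have h1 : 𝒟₂.map ((Φ.η β.carrier).inv) ≫ 𝒟₂.map ((Φ.η β.carrier).hom) = 𝟙 _ := by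
      rw [← 𝒟₂.map_comp, Iso.hom_inv_id, 𝒟₂.map_id]
    rw [← Category.assoc (𝒟₂.map ((Φ.η β.carrier).inv)), h1, Category.id_comp,
      ← Φ.η_natural β.form, ← Category.assoc, ← Φ.F.map_comp, ← β.symm]

lemma mapForm_nondeg (β : SymmForm 𝒟₁) (h : IsIso β.form) : IsIso (Φ.mapForm β).form := by
  have : IsIso (Φ.F.map β.form) := by haveI := h; infer_instance
  exact IsIso.comp_isIso' this (Iso.isIso_hom _)

end DualityFunctor

end DualityFunctor

section DFMore

variable {A : Type u} {B : Type u₁} {C : Type u₂} [Category.{v} A] [Category.{v₁} B]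
  [Category.{v₂} C] [Preadditive A] [Preadditive B] [Preadditive C]

/-- The identity duality functor. -/
def DualityFunctor.id (𝒟 : PreDuality A) : DualityFunctor 𝒟 𝒟 where
  F := 𝟭 A
  additive := inferInstance
  η X := Iso.refl _
  η_natural f := by simp
  χ_compat X := by simp [𝒟.map_id]

/-- Composition of duality functors. -/
def DualityFunctor.comp {𝒟₁ : PreDuality A} {𝒟₂ : PreDuality B} {𝒟₃ : PreDuality C}
    (Φ : DualityFunctor 𝒟₁ 𝒟₂) (Ψ : DualityFunctor 𝒟₂ 𝒟₃) : DualityFunctor 𝒟₁ 𝒟₃ where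
  F := Φ.F ⋙ Ψ.F
  additive := by
    have := Φ.additive
    have := Ψ.additive
    exact Functor.instAdditiveComp _ _
  η X := Ψ.F.mapIso (Φ.η X) ≪≫ Ψ.η (Φ.F.obj X)
  η_natural {X Y} f := by
    dsimp
    rw [← Category.assoc, ← Ψ.F.map_comp, Φ.η_natural f, Ψ.F.map_comp, Category.assoc,
      Ψ.η_natural (Φ.F.map f), ← Category.assoc]
  χ_compat X := by
    dsimp
    have h1 := Ψ.η_natural ((Φ.η X).inv)
    have h2 : 𝒟₃.map ((Ψ.η (Φ.F.obj X)).inv ≫ Ψ.F.map ((Φ.η X).inv))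
        = 𝒟₃.map (Ψ.F.map ((Φ.η X).inv)) ≫ 𝒟₃.map ((Ψ.η (Φ.F.obj X)).inv) :=
      𝒟₃.map_comp _ _
    rw [h2]
    simp only [Category.assoc]
    rw [← Category.assoc ((Ψ.η (Φ.F.obj (𝒟₁.obj X))).hom), ← h1]
    simp only [Category.assoc]
    slice_lhs 1 3 => rw [← Ψ.F.map_comp, ← Ψ.F.map_comp]
    rw [Φ.χ_compat X]
    simp only [Category.assoc]
    exact Ψ.χ_compat (Φ.F.obj X)

/-- A duality functor between the negated dualities. -/
def DualityFunctor.negD {𝒟₁ : PreDuality A} {𝒟₂ : PreDuality B}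
    (Φ : DualityFunctor 𝒟₁ 𝒟₂) : DualityFunctor 𝒟₁.neg 𝒟₂.neg where
  F := Φ.F
  additive := Φ.additive
  η := Φ.η
  η_natural := Φ.η_natural
  χ_compat X := by
    have := Φ.additive
    show Φ.F.map (-𝒟₁.χ X) ≫ (Φ.η _).hom ≫ 𝒟₂.map ((Φ.η X).inv) = -𝒟₂.χ (Φ.F.obj X)
    rw [Functor.map_neg, Preadditive.neg_comp, Φ.χ_compat X]

end DFMore

section Misc

open ZeroObject

variable {A : Type u} [Category.{v} A] [Abelian A]

/-- The zero form on the zero object. -/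
noncomputable def zeroForm (𝒟 : PreDuality A) : SymmForm 𝒟 where
  carrier := 0
  form := 0
  symm := by rw [𝒟.map_zero, Limits.comp_zero]

/-- Orthogonal direct sum of a finite list of symmetric forms. -/
noncomputable def orthSumList (𝒟 : PreDuality A) (l : List (SymmForm 𝒟)) : SymmForm 𝒟 :=
  l.foldr SymmForm.orthSum (zeroForm 𝒟)

/-- A Serre class in an abelian category: closed under isomorphisms, subobjects, quotients
and extensions, and containing the zero objects. -/
structure SerreClass (A : Type u) [Category.{v} A] [Abelian A] where
  P : A → Prop
  prop_of_iso : ∀ {X Y : A}, (X ≅ Y) → P X → P Y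
  prop_zero : ∀ X : A, IsZero X → P X
  prop_sub : ∀ {X Y : A} (f : X ⟶ Y), Mono f → P Y → P X
  prop_quot : ∀ {X Y : A} (f : X ⟶ Y), Epi f → P X → P Y
  prop_ext : ∀ {X Y Z : A} (f : X ⟶ Y) (g : Y ⟶ Z) (w : f ≫ g = 0), Mono f → Epi g →
    (CategoryTheory.ShortComplex.mk f g w).Exact → P X → P Z → P Y

/-- The smallest Serre class containing a given object `s`: "the full Serre subcategory
`⟨s⟩` generated by `s`". -/
def serreGen (s : A) : A → Prop := fun x => ∀ C : SerreClass A, C.P s → C.P x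

/-- Self-dual simple objects `s ≅ D s`. -/
abbrev SelfDualSimple (𝒟 : Duality A) : Type u :=
  {s : A // Simple s ∧ Nonempty (s ≅ 𝒟.obj s)}

instance sdSetoid (𝒟 : Duality A) : Setoid (SelfDualSimple 𝒟) where
  r s t := Nonempty (s.1 ≅ t.1)
  iseqv := ⟨fun _ => ⟨Iso.refl _⟩, fun ⟨e⟩ => ⟨e.symm⟩, fun ⟨e⟩ ⟨f⟩ => ⟨e.trans f⟩⟩

/-- Isomorphism classes of self-dual simple objects. -/
def SDIndex (𝒟 : Duality A) : Type u := Quotient (sdSetoid 𝒟)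

/-- The Witt group `W(⟨s⟩)` of the full Serre subcategory generated by `s`. -/
def SubWitt (𝒟 : Duality A) (s : A) : Type (max u v) :=
  WittGroup 𝒟.P SymmForm.Metabolic (serreGen s)

noncomputable instance (𝒟 : Duality A) (s : A) : AddCommGroup (SubWitt 𝒟 s) :=
  inferInstanceAs (AddCommGroup (WittGroup 𝒟.P SymmForm.Metabolic (serreGen s)))

/-- The Witt class in `W(⟨s⟩)`. -/
def subCls (𝒟 : Duality A) (s : A) (β : SymmForm 𝒟.P) (h : IsIso β.form)
    (hP : serreGen s β.carrier) : SubWitt 𝒟 s :=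
  wittClsP 𝒟.P SymmForm.Metabolic (serreGen s) β h hP

/-- A noetherian abelian category: every object satisfies the ascending chain condition
on subobjects. -/
def NoethCat (A : Type u) [Category.{v} A] : Prop :=
  ∀ X : A, WellFounded ((· > ·) : Subobject X → Subobject X → Prop)

end Misc
section Recollement

variable (A₀ : Type u₁) (B₀ : Type u₂) (C₀ : Type u₃)
  [Category.{v₁} A₀] [Category.{v₂} B₀] [Category.{v₃} C₀]
  [Abelian A₀] [Abelian B₀] [Abelian C₀]
  (DA : Duality A₀) (DB : Duality B₀) (DC : Duality C₀)

/-- Gluing (recollement) data for abelian hearts, as obtained from an exact triple of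
triangulated categories with duality `A → B → C` with a self-dual `t`-structure on `B`
glued from self-dual `t`-structures on `A` and `C`: the six functors
`i_* ⊣ ᵖi^! , ᵖi^* ⊣ i_*, ᵖj_! ⊣ j^*, j^* ⊣ ᵖj_*` on the hearts, the two exact sequences,
the compatibilities with the dualities, and the natural transformations
`ᵖi^! → ᵖi^*` and `ᵖj_! → ᵖj_*` defining intermediate restriction and extension. -/
structure ARecollement where
  /-- the (fully faithful, exact, duality-commuting) inclusion `i_* : A⁰ → B⁰` -/
  i : DualityFunctor DA.P DB.P
  /-- the (exact, duality-commuting) quotient functor `j^* : B⁰ → C⁰` -/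
  jq : DualityFunctor DB.P DC.P
  /-- `ᵖi^*` -/
  iL : B₀ ⥤ A₀
  /-- `ᵖi^!` -/
  iR : B₀ ⥤ A₀
  /-- `ᵖj_!` -/
  jL : C₀ ⥤ B₀
  /-- `ᵖj_*` -/
  jR : C₀ ⥤ B₀
  adj1 : iL ⊣ i.F
  adj2 : i.F ⊣ iR
  adj3 : jL ⊣ jq.F
  adj4 : jq.F ⊣ jR
  iFull : i.F.Full
  iFaithful : i.F.Faithful
  jLFull : jL.Full
  jLFaithful : jL.Faithful
  jRFull : jR.Full
  jRFaithful : jR.Faithful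
  iExactL : PreservesFiniteLimits i.F
  iExactR : PreservesFiniteColimits i.F
  jqExactL : PreservesFiniteLimits jq.F
  jqExactR : PreservesFiniteColimits jq.F
  /-- `j^* i_* = 0` -/
  ji_zero : ∀ a : A₀, IsZero (jq.F.obj (i.F.obj a))
  /-- objects killed by `j^*` come from `A⁰` -/
  ji_ker : ∀ b : B₀, IsZero (jq.F.obj b) → ∃ a : A₀, Nonempty (i.F.obj a ≅ b)
  /-- the exact sequence `0 → i_* ᵖi^! → id → ᵖj_* j^*` -/
  seq1_w : ∀ b : B₀, adj2.counit.app b ≫ adj4.unit.app b = 0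
  seq1_mono : ∀ b : B₀, Mono (adj2.counit.app b)
  seq1_exact : ∀ b : B₀,
    (CategoryTheory.ShortComplex.mk _ _ (seq1_w b)).Exact
  /-- the exact sequence `ᵖj_! j^* → id → i_* ᵖi^* → 0` -/
  seq2_w : ∀ b : B₀, adj3.counit.app b ≫ adj1.unit.app b = 0
  seq2_epi : ∀ b : B₀, Epi (adj1.unit.app b)
  seq2_exact : ∀ b : B₀,
    (CategoryTheory.ShortComplex.mk _ _ (seq2_w b)).Exact
  /-- the natural transformation `ᵖi^! → ᵖi^*` -/
  ν : iR ⟶ iL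
  /-- the natural transformation `ᵖj_! → ᵖj_*` -/
  μ : jL ⟶ jR
  /-- duality exchanges `ᵖi^!` and `ᵖi^*` -/
  ξ : ∀ b : B₀, iR.obj (DB.obj b) ≅ DA.obj (iL.obj b)
  ξ_natural : ∀ {b b' : B₀} (f : b ⟶ b'),
    iR.map (DB.P.map f) ≫ (ξ b).hom = (ξ b').hom ≫ DA.P.map (iL.map f)
  /-- duality exchanges `ᵖj_!` and `ᵖj_*` -/
  ζ : ∀ c : C₀, jL.obj (DC.obj c) ≅ DB.obj (jR.obj c)
  ζ_natural : ∀ {c c' : C₀} (f : c ⟶ c'),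
    jL.map (DC.P.map f) ≫ (ζ c).hom = (ζ c').hom ≫ DB.P.map (jR.map f)
  /-- for a symmetric form `β` on `b`, the induced (possibly degenerate) form on `ᵖi^! b`
  is symmetric -/
  restrSymm : ∀ β : SymmForm DB.P,
    (iR.map β.form ≫ (ξ β.carrier).hom ≫ DA.P.map (ν.app β.carrier)) =
      DA.P.χ _ ≫ DA.P.map
        (iR.map β.form ≫ (ξ β.carrier).hom ≫ DA.P.map (ν.app β.carrier))
  /-- for a symmetric form `γ` on `c`, the induced (possibly degenerate) form on `ᵖj_! c`
  is symmetric -/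
  extSymm : ∀ γ : SymmForm DC.P,
    (jL.map γ.form ≫ (ζ γ.carrier).hom ≫ DB.P.map (μ.app γ.carrier)) =
      DB.P.χ _ ≫ DB.P.map
        (jL.map γ.form ≫ (ζ γ.carrier).hom ≫ DB.P.map (μ.app γ.carrier))

namespace ARecollement

variable {A₀ B₀ C₀ DA DB DC} (R : ARecollement A₀ B₀ C₀ DA DB DC)

/-- The (possibly degenerate) symmetric form induced on `ᵖi^! b` by a symmetric form on
`b`. -/
def restrForm (β : SymmForm DB.P) : SymmForm DA.P where
  carrier := R.iR.obj β.carrier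
  form := R.iR.map β.form ≫ (R.ξ β.carrier).hom ≫ DA.P.map (R.ν.app β.carrier)
  symm := R.restrSymm β

/-- The intermediate restriction `i^{!*} β`: the induced non-degenerate symmetric form on
`im (ᵖi^! b → ᵖi^* b)`. -/
noncomputable def interRestr (β : SymmForm DB.P) : SymmForm DA.P :=
  (R.restrForm β).reduceKernel

/-- The (possibly degenerate) symmetric form induced on `ᵖj_! c` by a symmetric form on
`c`. -/
def extForm (γ : SymmForm DC.P) : SymmForm DB.P where
  carrier := R.jL.obj γ.carrier
  form := R.jL.map γ.form ≫ (R.ζ γ.carrier).hom ≫ DB.P.map (R.μ.app γ.carrier)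
  symm := R.extSymm γ

/-- The intermediate extension `j_{!*} γ`: the induced non-degenerate symmetric form on
`im (ᵖj_! c → ᵖj_* c)`. -/
noncomputable def interExt (γ : SymmForm DC.P) : SymmForm DB.P :=
  (R.extForm γ).reduceKernel

end ARecollement

end Recollement

/-! ### Auxiliary lemmas for Statement 14 -/

section Stmt14Helpers

variable {A : Type u} [Category.{v} A] [Preadditive A]

lemma PreDuality.isIso_map (𝒟 : PreDuality A) {X Y : A} (f : X ⟶ Y) [IsIso f] :
    IsIso (𝒟.map f) :=
  ⟨⟨𝒟.map (inv f),
    ⟨by rw [← 𝒟.map_comp, IsIso.inv_hom_id, 𝒟.map_id],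
     by rw [← 𝒟.map_comp, IsIso.hom_inv_id, 𝒟.map_id]⟩⟩⟩

/-- Restriction of an anisotropic form along a monomorphism is anisotropic. -/
lemma Anisotropic.restrict {𝒟 : PreDuality A} {β : SymmForm 𝒟} (hβ : Anisotropic β)
    {a : A} (m : a ⟶ β.carrier) (hm : Mono m) :
    Anisotropic (β.restrict m) := by
  intro z v hv h0
  change z ⟶ a at v
  haveI : Mono v := hv; haveI := hm
  refine hβ z (v ≫ m) (mono_comp v m) ?_
  have h1 : (v ≫ m) ≫ β.form ≫ 𝒟.map (v ≫ m) =
      v ≫ (m ≫ β.form ≫ 𝒟.map m) ≫ 𝒟.map v := by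
    rw [𝒟.map_comp]
    simp only [Category.assoc]
  rw [h1]
  exact h0

end Stmt14Helpers

section Stmt14AbelianHelpers

variable {A : Type u} [Category.{v} A] [Abelian A]

lemma Duality.epi_map_of_mono (𝒟 : Duality A) {X Y : A} (f : X ⟶ Y) (hf : Mono f) :
    Epi (𝒟.P.map f) := by
  haveI := hf
  have hk : kernel.ι f = 0 := by
    rw [← cancel_mono f, kernel.condition, zero_comp]
  refine Preadditive.epi_of_cancel_zero _ (fun g hg => ?_)
  obtain ⟨t, ht⟩ := CokernelCofork.IsColimit.desc' (𝒟.dualKernelIsCokernel f) g hg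
  rw [← ht]
  show 𝒟.P.map (kernel.ι f) ≫ t = 0
  rw [hk, 𝒟.P.map_zero, zero_comp]

/-- The form of an anisotropic symmetric form is a monomorphism. -/
lemma Anisotropic.mono_form {𝒟 : PreDuality A} {β : SymmForm 𝒟} (hβ : Anisotropic β) :
    Mono β.form := by
  have h0 : kernel.ι β.form ≫ β.form ≫ 𝒟.map (kernel.ι β.form) = 0 := by
    rw [← Category.assoc, kernel.condition, zero_comp]
  have hz : IsZero (kernel β.form) := hβ _ (kernel.ι β.form) inferInstance h0
  exact Preadditive.mono_of_kernel_zero (hz.eq_zero_of_src _)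

/-- If every isotropic subobject of `δ` lies in the radical of `δ`, then the reduction of `δ`
by its kernel is anisotropic. -/
lemma SymmForm.anisotropic_reduceKernel {𝒟 : Duality A} (δ : SymmForm 𝒟.P)
    (hrad : ∀ (x : A) (u : x ⟶ δ.carrier), Mono u → u ≫ δ.form ≫ 𝒟.P.map u = 0 →
      u ≫ δ.form = 0) :
    Anisotropic δ.reduceKernel := by
  intro a m hm h0
  haveI := hm
  have hi : kernel.ι δ.form ≫ δ.form ≫ 𝒟.P.map (kernel.ι δ.form) = 0 := by
    rw [← Category.assoc, kernel.condition, zero_comp]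
  have hφ : δ.reduceKernel.form ≫
        𝒟.P.map (cokernel.π (SymmForm.perpLift δ (kernel.ι δ.form) hi)) =
      SymmForm.reducePre δ (kernel.ι δ.form) hi :=
    (KernelFork.IsLimit.lift' (𝒟.dualCokernelIsKernel (SymmForm.perpLift δ (kernel.ι δ.form) hi))
      (SymmForm.reducePre δ (kernel.ι δ.form) hi) (SymmForm.reduce_h2 δ (kernel.ι δ.form) hi)).2
  have hπs : cokernel.π (SymmForm.perpLift δ (kernel.ι δ.form) hi) ≫
        SymmForm.reducePre δ (kernel.ι δ.form) hi =
      kernel.ι (δ.form ≫ 𝒟.P.map (kernel.ι δ.form)) ≫ δ.form ≫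
        𝒟.P.map (kernel.ι (δ.form ≫ 𝒟.P.map (kernel.ι δ.form))) :=
    cokernel.π_desc _ _ _
  set pl := SymmForm.perpLift δ (kernel.ι δ.form) hi with hpl
  change a ⟶ cokernel pl at m
  haveI : Mono m := hm
  obtain ⟨F', hF'⟩ : ∃ F' : cokernel pl ⟶ 𝒟.P.obj (cokernel pl), F' = δ.reduceKernel.form :=
    ⟨_, rfl⟩
  have hφ' : F' ≫ 𝒟.P.map (cokernel.π pl) = SymmForm.reducePre δ (kernel.ι δ.form) hi := by
    rw [hF']; exact hφ
  have h0' : m ≫ F' ≫ 𝒟.P.map m = 0 := by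
    rw [hF']; exact h0
  have hiso : (pullback.snd m (cokernel.π pl) ≫
        kernel.ι (δ.form ≫ 𝒟.P.map (kernel.ι δ.form))) ≫
      δ.form ≫ 𝒟.P.map (pullback.snd m (cokernel.π pl) ≫
        kernel.ι (δ.form ≫ 𝒟.P.map (kernel.ι δ.form))) = 0 := by
    rw [𝒟.P.map_comp]
    have e1 : kernel.ι (δ.form ≫ 𝒟.P.map (kernel.ι δ.form)) ≫ δ.form ≫
        𝒟.P.map (kernel.ι (δ.form ≫ 𝒟.P.map (kernel.ι δ.form))) =
        cokernel.π pl ≫ SymmForm.reducePre δ (kernel.ι δ.form) hi := hπs.symm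
    simp only [Category.assoc]
    slice_lhs 2 4 => rw [e1]
    rw [← hφ']
    simp only [Category.assoc]
    rw [← 𝒟.P.map_comp, ← pullback.condition, 𝒟.P.map_comp]
    slice_lhs 1 2 => rw [← pullback.condition]
    slice_lhs 2 4 => rw [h0']
    simp
  have hrad1 : (pullback.snd m (cokernel.π pl) ≫
      kernel.ι (δ.form ≫ 𝒟.P.map (kernel.ι δ.form))) ≫ δ.form = 0 :=
    hrad _ _ (mono_comp _ _) hiso
  have hk1 : kernel.lift δ.form _ hrad1 ≫ kernel.ι δ.form =
      pullback.snd m (cokernel.π pl) ≫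
        kernel.ι (δ.form ≫ 𝒟.P.map (kernel.ι δ.form)) := kernel.lift_ι _ _ _
  have hplι : pl ≫ kernel.ι (δ.form ≫ 𝒟.P.map (kernel.ι δ.form)) = kernel.ι δ.form :=
    SymmForm.perpLift_ι δ (kernel.ι δ.form) hi
  have hsnd : pullback.snd m (cokernel.π pl) = kernel.lift δ.form _ hrad1 ≫ pl := by
    rw [← cancel_mono (kernel.ι (δ.form ≫ 𝒟.P.map (kernel.ι δ.form))), Category.assoc,
      hplι, hk1]
  have hfstm : pullback.fst m (cokernel.π pl) ≫ m = 0 := by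
    rw [pullback.condition, hsnd, Category.assoc, cokernel.condition, comp_zero]
  have hm0 : m = 0 := by
    rw [← cancel_epi (pullback.fst m (cokernel.π pl)), comp_zero]
    exact hfstm
  exact IsZero.of_mono_eq_zero m hm0

end Stmt14AbelianHelpers

section Stmt14Recollement

variable {A₀ : Type u₁} {B₀ : Type u₂} {C₀ : Type u₃}
  [Category.{v₁} A₀] [Category.{v₂} B₀] [Category.{v₃} C₀]
  [Abelian A₀] [Abelian B₀] [Abelian C₀]
  {DA : Duality A₀} {DB : Duality B₀} {DC : Duality C₀}
  (R : ARecollement A₀ B₀ C₀ DA DB DC)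

namespace ARecollement

/-- Naturality of the twisted pairing `w̃ = ξ ≫ D ν` on the `i`-side. -/
lemma W_natural {z z' : B₀} (f : z ⟶ z') :
    R.iR.map (DB.P.map f) ≫ (R.ξ z).hom ≫ DA.P.map (R.ν.app z) =
      (R.ξ z').hom ≫ DA.P.map (R.ν.app z') ≫ DA.P.map (R.iR.map f) := by
  rw [← Category.assoc, R.ξ_natural f, Category.assoc, ← DA.P.map_comp, ← R.ν.naturality f,
    DA.P.map_comp]

/-- Naturality of the twisted pairing `w̃ = ζ ≫ D μ` on the `j`-side. -/
lemma We_natural {z z' : C₀} (f : z ⟶ z') :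
    R.jL.map (DC.P.map f) ≫ (R.ζ z).hom ≫ DB.P.map (R.μ.app z) =
      (R.ζ z').hom ≫ DB.P.map (R.μ.app z') ≫ DB.P.map (R.jL.map f) := by
  rw [← Category.assoc, R.ζ_natural f, Category.assoc, ← DB.P.map_comp, ← R.μ.naturality f,
    DB.P.map_comp]

/-- The operator on `DA` induced by restricting `w̃` along the fully faithful functor `i_*`. -/
def wA (a : A₀) : DA.obj a ⟶ DA.obj a :=
  R.adj2.unit.app (DA.obj a) ≫ R.iR.map ((R.i.η a).hom) ≫ (R.ξ (R.i.F.obj a)).hom ≫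
    DA.P.map (R.ν.app (R.i.F.obj a)) ≫ DA.P.map (R.adj2.unit.app a)

/-- The operator on `DC` induced by restricting the `j`-side `w̃` along `jq ∘ jL ≅ 1`. -/
def wC (z : C₀) : DC.obj z ⟶ DC.obj z :=
  R.adj3.unit.app (DC.obj z) ≫ R.jq.F.map ((R.ζ z).hom) ≫ R.jq.F.map (DB.P.map (R.μ.app z)) ≫
    (R.jq.η (R.jL.obj z)).hom ≫ DC.P.map (R.adj3.unit.app z)

lemma wA_natural {a₁ a₂ : A₀} (g : a₁ ⟶ a₂) :
    DA.P.map g ≫ R.wA a₁ = R.wA a₂ ≫ DA.P.map g := by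
  have h1 : DA.P.map g ≫ R.adj2.unit.app (DA.obj a₁) =
      R.adj2.unit.app (DA.obj a₂) ≫ R.iR.map (R.i.F.map (DA.P.map g)) := by
    simpa using R.adj2.unit.naturality (DA.P.map g)
  have h2 : R.i.F.map (DA.P.map g) ≫ (R.i.η a₁).hom =
      (R.i.η a₂).hom ≫ DB.P.map (R.i.F.map g) := R.i.η_natural g
  have h3 := R.W_natural (R.i.F.map g)
  have h4 : R.adj2.unit.app a₁ ≫ R.iR.map (R.i.F.map g) = g ≫ R.adj2.unit.app a₂ := by
    simpa using (R.adj2.unit.naturality g).symm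
  unfold ARecollement.wA
  slice_lhs 1 2 => rw [h1]
  slice_lhs 2 3 => rw [← R.iR.map_comp, h2, R.iR.map_comp]
  slice_lhs 3 5 => rw [h3]
  slice_lhs 5 6 => rw [← DA.P.map_comp, h4, DA.P.map_comp]
  simp only [Category.assoc]

lemma wC_natural {z₁ z₂ : C₀} (g : z₁ ⟶ z₂) :
    DC.P.map g ≫ R.wC z₁ = R.wC z₂ ≫ DC.P.map g := by
  have h1 : DC.P.map g ≫ R.adj3.unit.app (DC.obj z₁) =
      R.adj3.unit.app (DC.obj z₂) ≫ R.jq.F.map (R.jL.map (DC.P.map g)) := by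
    simpa using R.adj3.unit.naturality (DC.P.map g)
  have h2 : R.jL.map (DC.P.map g) ≫ (R.ζ z₁).hom =
      (R.ζ z₂).hom ≫ DB.P.map (R.jR.map g) := R.ζ_natural g
  have h2' : DB.P.map (R.jR.map g) ≫ DB.P.map (R.μ.app z₁) =
      DB.P.map (R.μ.app z₂) ≫ DB.P.map (R.jL.map g) := by
    rw [← DB.P.map_comp, ← R.μ.naturality g, DB.P.map_comp]
  have h3 : R.jq.F.map (DB.P.map (R.jL.map g)) ≫ (R.jq.η (R.jL.obj z₁)).hom =
      (R.jq.η (R.jL.obj z₂)).hom ≫ DC.P.map (R.jq.F.map (R.jL.map g)) :=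
    R.jq.η_natural (R.jL.map g)
  have h4 : R.adj3.unit.app z₁ ≫ R.jq.F.map (R.jL.map g) = g ≫ R.adj3.unit.app z₂ := by
    simpa using (R.adj3.unit.naturality g).symm
  unfold ARecollement.wC
  slice_lhs 1 2 => rw [h1]
  slice_lhs 2 3 => rw [← R.jq.F.map_comp, h2, R.jq.F.map_comp]
  slice_lhs 3 4 => rw [← R.jq.F.map_comp, h2', R.jq.F.map_comp]
  slice_lhs 4 5 => rw [h3]
  slice_lhs 5 6 => rw [← DC.P.map_comp, h4, DC.P.map_comp]
  simp only [Category.assoc]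

end ARecollement

end Stmt14Recollement

section Stmt14Main

variable {A₀ : Type u₁} {B₀ : Type u₂} {C₀ : Type u₃}
  [Category.{v₁} A₀] [Category.{v₂} B₀] [Category.{v₃} C₀]
  [Abelian A₀] [Abelian B₀] [Abelian C₀]
  {DA : Duality A₀} {DB : Duality B₀} {DC : Duality C₀}
  (R : ARecollement A₀ B₀ C₀ DA DB DC)

namespace ARecollement

/-- Every isotropic subobject of the (possibly degenerate) form induced on `ᵖi^! b` by an
anisotropic form `β` lies in its radical. -/
lemma restr_radical (β : SymmForm DB.P) (hβ : Anisotropic β)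
    (x : A₀) (u : x ⟶ R.iR.obj β.carrier) (hu : Mono u)
    (h0 : u ≫ (R.iR.map β.form ≫ (R.ξ β.carrier).hom ≫ DA.P.map (R.ν.app β.carrier)) ≫
      DA.P.map u = 0) :
    u ≫ (R.iR.map β.form ≫ (R.ξ β.carrier).hom ≫ DA.P.map (R.ν.app β.carrier)) = 0 := by
  haveI := R.iFull
  haveI := R.iFaithful
  haveI := R.iExactL
  haveI := R.i.additive
  haveI := hu
  haveI := R.seq1_mono β.carrier
  haveI : Mono (R.i.F.map u) := R.i.F.map_mono u
  obtain ⟨p, hp⟩ : ∃ p : R.i.F.obj x ⟶ β.carrier,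
      p = R.i.F.map u ≫ R.adj2.counit.app β.carrier := ⟨_, rfl⟩
  haveI : Mono p := by rw [hp]; exact mono_comp _ _
  haveI : IsIso (R.adj2.unit.app x) := inferInstance
  haveI : IsIso (DA.P.map (R.adj2.unit.app x)) := DA.P.isIso_map _
  -- `u` is the transpose of `p`
  have hu2 : u = R.adj2.unit.app x ≫ R.iR.map p := by
    rw [hp, R.iR.map_comp (R.i.F.map u) (R.adj2.counit.app β.carrier), ← Category.assoc]
    have h1 : R.adj2.unit.app x ≫ R.iR.map (R.i.F.map u) =
        u ≫ R.adj2.unit.app (R.iR.obj β.carrier) := by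
      simpa using (R.adj2.unit.naturality u).symm
    rw [h1, Category.assoc, R.adj2.right_triangle_components, Category.comp_id]
  -- the hypothesis, with the unit isomorphisms cancelled
  have hM : R.iR.map p ≫ (R.iR.map β.form ≫ (R.ξ β.carrier).hom ≫
      DA.P.map (R.ν.app β.carrier)) ≫ DA.P.map (R.iR.map p) = 0 := by
    have h2 := h0
    rw [hu2, DA.P.map_comp] at h2
    rw [← cancel_mono (DA.P.map (R.adj2.unit.app x)), ← cancel_epi (R.adj2.unit.app x)]
    simpa [Category.assoc] using h2
  -- the restricted form is killed by `w̃` at `i_* x`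
  have hA : R.iR.map (p ≫ β.form ≫ DB.P.map p) ≫ (R.ξ (R.i.F.obj x)).hom ≫
      DA.P.map (R.ν.app (R.i.F.obj x)) = 0 := by
    have hw := R.W_natural p
    calc R.iR.map (p ≫ β.form ≫ DB.P.map p) ≫ (R.ξ (R.i.F.obj x)).hom ≫
          DA.P.map (R.ν.app (R.i.F.obj x))
        = R.iR.map p ≫ R.iR.map β.form ≫ R.iR.map (DB.P.map p) ≫ (R.ξ (R.i.F.obj x)).hom ≫
            DA.P.map (R.ν.app (R.i.F.obj x)) := by
          rw [R.iR.map_comp p (β.form ≫ DB.P.map p), R.iR.map_comp β.form (DB.P.map p)]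
          simp only [Category.assoc]
      _ = R.iR.map p ≫ R.iR.map β.form ≫ (R.ξ β.carrier).hom ≫ DA.P.map (R.ν.app β.carrier) ≫
            DA.P.map (R.iR.map p) := by rw [hw]
      _ = 0 := by
          have h2' := hM
          simp only [Category.assoc] at h2' ⊢
          exact h2'
  -- the restricted form `γ' = β|_p` is a monomorphism (anisotropy of `β`)
  have hKzero : IsZero (kernel (p ≫ β.form ≫ DB.P.map p)) := by
    refine hβ _ (kernel.ι (p ≫ β.form ≫ DB.P.map p) ≫ p) (mono_comp _ _) ?_
    have h3 : kernel.ι (p ≫ β.form ≫ DB.P.map p) ≫ p ≫ β.form ≫ DB.P.map p = 0 :=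
      kernel.condition _
    calc (kernel.ι (p ≫ β.form ≫ DB.P.map p) ≫ p) ≫ β.form ≫
          DB.P.map (kernel.ι (p ≫ β.form ≫ DB.P.map p) ≫ p)
        = (kernel.ι (p ≫ β.form ≫ DB.P.map p) ≫ (p ≫ β.form ≫ DB.P.map p)) ≫
            DB.P.map (kernel.ι (p ≫ β.form ≫ DB.P.map p)) := by
          rw [DB.P.map_comp]
          simp only [Category.assoc]
      _ = 0 := by rw [h3, zero_comp]
  have hγmono : Mono (p ≫ β.form ≫ DB.P.map p) := Preadditive.mono_of_isZero_kernel _ hKzero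
  -- `γ'` comes from a symmetric form `a` on `x` in `A₀`
  obtain ⟨a, hafull⟩ := R.i.F.map_surjective ((p ≫ β.form ≫ DB.P.map p) ≫ (R.i.η x).inv)
  have haF : R.i.F.map a ≫ (R.i.η x).hom = p ≫ β.form ≫ DB.P.map p := by
    rw [hafull, Category.assoc, Iso.inv_hom_id, Category.comp_id]
  haveI : Mono (R.i.F.map a) := by
    rw [hafull]
    haveI := hγmono
    exact mono_comp _ _
  haveI : Mono a := R.i.F.mono_of_mono_map inferInstance
  have hcompat : DB.P.χ (R.i.F.obj x) ≫ DB.P.map (p ≫ β.form ≫ DB.P.map p) =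
      R.i.F.map (DA.P.χ x ≫ DA.P.map a) ≫ (R.i.η x).hom := by
    rw [R.i.F.map_comp, Category.assoc, R.i.η_natural a, hafull,
      DB.P.map_comp (p ≫ β.form ≫ DB.P.map p) (R.i.η x).inv, ← R.i.χ_compat x]
    simp only [Category.assoc]
  have hasymm : a = DA.P.χ x ≫ DA.P.map a := by
    apply R.i.F.map_injective
    rw [← cancel_mono ((R.i.η x).hom), haF, ← hcompat]
    exact SymmForm.restrict_symm β p
  -- `a ≫ wA x = 0`
  have hKA : a ≫ R.wA x = 0 := by
    have h5 : a ≫ R.adj2.unit.app (DA.obj x) =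
        R.adj2.unit.app x ≫ R.iR.map (R.i.F.map a) := by
      simpa using R.adj2.unit.naturality a
    have h5' : R.iR.map (R.i.F.map a) ≫ R.iR.map ((R.i.η x).hom) =
        R.iR.map (p ≫ β.form ≫ DB.P.map p) := by
      rw [← R.iR.map_comp, haF]
    unfold ARecollement.wA
    rw [reassoc_of% h5, reassoc_of% h5', reassoc_of% hA]
    simp
  -- kill `wA (DA.obj x)` and then `w̃` at `F (DA.obj x)` and `DB (F x)`
  haveI : IsIso (DA.P.χ x) := DA.P.χ_iso x
  have hwnat := R.wA_natural a
  have hDAa : DA.P.map a = inv (DA.P.χ x) ≫ a := by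
    rw [IsIso.eq_inv_comp]
    exact hasymm.symm
  have hz1 : DA.P.χ x ≫ R.wA (DA.obj x) ≫ inv (DA.P.χ x) ≫ a = 0 := by
    rw [← hDAa, ← hwnat, ← Category.assoc, ← hasymm]
    exact hKA
  have hz2 : R.wA (DA.obj x) = 0 := by
    have h6 : DA.P.χ x ≫ R.wA (DA.obj x) ≫ inv (DA.P.χ x) = 0 := by
      rw [← cancel_mono a, zero_comp]
      simpa [Category.assoc] using hz1
    have h8 : R.wA (DA.obj x) = inv (DA.P.χ x) ≫
        (DA.P.χ x ≫ R.wA (DA.obj x) ≫ inv (DA.P.χ x)) ≫ DA.P.χ x := by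
      simp
    rw [h8, h6, zero_comp, comp_zero]
  haveI : IsIso (R.adj2.unit.app (DA.obj x)) := inferInstance
  haveI : IsIso (R.adj2.unit.app (DA.obj (DA.obj x))) := inferInstance
  haveI : IsIso (DA.P.map (R.adj2.unit.app (DA.obj x))) := DA.P.isIso_map _
  have hW2 : (R.ξ (R.i.F.obj (DA.obj x))).hom ≫
      DA.P.map (R.ν.app (R.i.F.obj (DA.obj x))) = 0 := by
    have h8 := hz2
    unfold ARecollement.wA at h8
    have h9 : R.iR.map ((R.i.η (DA.obj x)).hom) ≫ (R.ξ (R.i.F.obj (DA.obj x))).hom ≫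
        DA.P.map (R.ν.app (R.i.F.obj (DA.obj x))) ≫
        DA.P.map (R.adj2.unit.app (DA.obj x)) = 0 := by
      rw [← cancel_epi (R.adj2.unit.app (DA.obj (DA.obj x)))]
      simpa [Category.assoc] using h8
    have h10 : R.iR.map ((R.i.η (DA.obj x)).hom) ≫ (R.ξ (R.i.F.obj (DA.obj x))).hom ≫
        DA.P.map (R.ν.app (R.i.F.obj (DA.obj x))) = 0 := by
      rw [← cancel_mono (DA.P.map (R.adj2.unit.app (DA.obj x)))]
      simpa [Category.assoc] using h9
    rw [← cancel_epi (R.iR.map ((R.i.η (DA.obj x)).hom))]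
    simpa using h10
  have hW3 : (R.ξ (DB.obj (R.i.F.obj x))).hom ≫
      DA.P.map (R.ν.app (DB.obj (R.i.F.obj x))) = 0 := by
    have h11 := R.W_natural ((R.i.η x).hom)
    rw [hW2] at h11
    simp only [comp_zero] at h11
    haveI : IsIso (DA.P.map (R.iR.map ((R.i.η x).hom))) := DA.P.isIso_map _
    rw [← cancel_mono (DA.P.map (R.iR.map ((R.i.η x).hom))), zero_comp, Category.assoc]
    exact h11.symm
  -- final computation
  have hq : p ≫ β.form = DB.P.χ (R.i.F.obj x) ≫ DB.P.map (β.form ≫ DB.P.map p) := by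
    rw [DB.P.map_comp, ← Category.assoc, ← DB.P.χ_natural p, Category.assoc, ← β.symm]
  have h12 := R.W_natural (β.form ≫ DB.P.map p)
  have e4 : R.iR.map p ≫ R.iR.map β.form = R.iR.map (DB.P.χ (R.i.F.obj x)) ≫
      R.iR.map (DB.P.map (β.form ≫ DB.P.map p)) := by
    rw [← R.iR.map_comp, hq, R.iR.map_comp]
  rw [hu2]
  simp only [Category.assoc]
  rw [reassoc_of% e4, h12, reassoc_of% hW3]
  simp

/-- Every isotropic subobject of the (possibly degenerate) form induced on `ᵖj_! c` by an
anisotropic form `γ` lies in its radical. -/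
lemma ext_radical (γ : SymmForm DC.P) (hγ : Anisotropic γ)
    (x : B₀) (u : x ⟶ R.jL.obj γ.carrier) (hu : Mono u)
    (h0 : u ≫ (R.jL.map γ.form ≫ (R.ζ γ.carrier).hom ≫ DB.P.map (R.μ.app γ.carrier)) ≫
      DB.P.map u = 0) :
    u ≫ (R.jL.map γ.form ≫ (R.ζ γ.carrier).hom ≫ DB.P.map (R.μ.app γ.carrier)) = 0 := by
  haveI := R.jLFull
  haveI := R.jLFaithful
  haveI := R.jqExactL
  haveI := R.jq.additive
  haveI := hu
  haveI : IsIso (R.adj3.unit.app γ.carrier) := inferInstance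
  haveI : Mono (R.jq.F.map u) := R.jq.F.map_mono u
  obtain ⟨p, hp⟩ : ∃ p : R.jq.F.obj x ⟶ γ.carrier,
      p = R.jq.F.map u ≫ inv (R.adj3.unit.app γ.carrier) := ⟨_, rfl⟩
  haveI : Mono p := by rw [hp]; exact mono_comp _ _
  have hJu : R.jq.F.map u = p ≫ R.adj3.unit.app γ.carrier := by
    rw [hp, Category.assoc, IsIso.inv_hom_id, Category.comp_id]
  -- the transported form `φ = γ.form ≫ wC c`
  have ht : γ.form ≫ R.adj3.unit.app (DC.obj γ.carrier) =
      R.adj3.unit.app γ.carrier ≫ R.jq.F.map (R.jL.map γ.form) := by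
    simpa using R.adj3.unit.naturality γ.form
  have hφw : R.adj3.unit.app γ.carrier ≫
      (R.jq.F.map (R.jL.map γ.form ≫ (R.ζ γ.carrier).hom ≫ DB.P.map (R.μ.app γ.carrier)) ≫
        (R.jq.η (R.jL.obj γ.carrier)).hom) ≫ DC.P.map (R.adj3.unit.app γ.carrier) =
      γ.form ≫ R.wC γ.carrier := by
    rw [R.jq.F.map_comp (R.jL.map γ.form) ((R.ζ γ.carrier).hom ≫ DB.P.map (R.μ.app γ.carrier)),
      R.jq.F.map_comp (R.ζ γ.carrier).hom (DB.P.map (R.μ.app γ.carrier))]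
    simp only [Category.assoc]
    rw [← reassoc_of% ht]
    unfold ARecollement.wC
    simp only [Category.assoc]
  have hMform : (R.jq.mapForm (R.extForm γ)).form =
      R.jq.F.map (R.jL.map γ.form ≫ (R.ζ γ.carrier).hom ≫ DB.P.map (R.μ.app γ.carrier)) ≫
        (R.jq.η (R.jL.obj γ.carrier)).hom := rfl
  have hφsymm0 := SymmForm.restrict_symm (R.jq.mapForm (R.extForm γ)) (R.adj3.unit.app γ.carrier)
  replace hφsymm0 : γ.form ≫ R.wC γ.carrier =
      DC.P.χ ((𝟭 C₀).obj γ.carrier) ≫ DC.P.map (γ.form ≫ R.wC γ.carrier) := by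
    rw [← hφw]; exact hφsymm0
  simp only [Functor.id_obj] at hφsymm0
  -- push the hypothesis to `C₀`
  have hh1 : R.jq.F.map u ≫
      (R.jq.F.map (R.jL.map γ.form ≫ (R.ζ γ.carrier).hom ≫ DB.P.map (R.μ.app γ.carrier)) ≫
        (R.jq.η (R.jL.obj γ.carrier)).hom) ≫ DC.P.map (R.jq.F.map u) = 0 := by
    have h2 : R.jq.F.map (u ≫ (R.jL.map γ.form ≫ (R.ζ γ.carrier).hom ≫
        DB.P.map (R.μ.app γ.carrier)) ≫ DB.P.map u) = 0 := by
      rw [h0, Functor.map_zero]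
    rw [R.jq.F.map_comp u ((R.jL.map γ.form ≫ (R.ζ γ.carrier).hom ≫
        DB.P.map (R.μ.app γ.carrier)) ≫ DB.P.map u),
      R.jq.F.map_comp (R.jL.map γ.form ≫ (R.ζ γ.carrier).hom ≫
        DB.P.map (R.μ.app γ.carrier)) (DB.P.map u)] at h2
    have h4 : (R.jq.F.map u ≫
        R.jq.F.map (R.jL.map γ.form ≫ (R.ζ γ.carrier).hom ≫ DB.P.map (R.μ.app γ.carrier)) ≫
        R.jq.F.map (DB.P.map u)) ≫ (R.jq.η x).hom = 0 := by
      rw [h2, zero_comp]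
    simp only [Category.assoc] at h4
    rw [R.jq.η_natural u] at h4
    simpa [Category.assoc] using h4
  have hObs : p ≫ (γ.form ≫ R.wC γ.carrier) ≫ DC.P.map p = 0 := by
    have h5 := hh1
    rw [hJu, DC.P.map_comp p (R.adj3.unit.app γ.carrier)] at h5
    rw [← hφw]
    simpa [Category.assoc] using h5
  -- naturality of `wC` along `p`
  have hwnatp := R.wC_natural p
  have hknown : (p ≫ γ.form ≫ DC.P.map p) ≫ R.wC (R.jq.F.obj x) = 0 := by
    have h6 := hObs
    simp only [Category.assoc] at h6
    rw [← hwnatp] at h6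
    simpa [Category.assoc] using h6
  -- the restricted form is a monomorphism
  have hKz : IsZero (kernel (p ≫ γ.form ≫ DC.P.map p)) := by
    refine hγ _ (kernel.ι (p ≫ γ.form ≫ DC.P.map p) ≫ p) (mono_comp _ _) ?_
    have h3 : kernel.ι (p ≫ γ.form ≫ DC.P.map p) ≫ p ≫ γ.form ≫ DC.P.map p = 0 :=
      kernel.condition _
    calc (kernel.ι (p ≫ γ.form ≫ DC.P.map p) ≫ p) ≫ γ.form ≫
          DC.P.map (kernel.ι (p ≫ γ.form ≫ DC.P.map p) ≫ p)
        = (kernel.ι (p ≫ γ.form ≫ DC.P.map p) ≫ (p ≫ γ.form ≫ DC.P.map p)) ≫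
            DC.P.map (kernel.ι (p ≫ γ.form ≫ DC.P.map p)) := by
          rw [DC.P.map_comp]
          simp only [Category.assoc]
      _ = 0 := by rw [h3, zero_comp]
  have hαmono : Mono (p ≫ γ.form ≫ DC.P.map p) := Preadditive.mono_of_isZero_kernel _ hKz
  haveI := hαmono
  -- kill `wC` at `jq x` and its dual
  have hαsymm := SymmForm.restrict_symm γ p
  have hwnatα := R.wC_natural (p ≫ γ.form ≫ DC.P.map p)
  haveI : IsIso (DC.P.χ (R.jq.F.obj x)) := DC.P.χ_iso _
  have hDCα : DC.P.map (p ≫ γ.form ≫ DC.P.map p) =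
      inv (DC.P.χ (R.jq.F.obj x)) ≫ (p ≫ γ.form ≫ DC.P.map p) := by
    rw [IsIso.eq_inv_comp]
    exact hαsymm.symm
  have hz1 : DC.P.χ (R.jq.F.obj x) ≫ R.wC (DC.obj (R.jq.F.obj x)) ≫
      inv (DC.P.χ (R.jq.F.obj x)) ≫ (p ≫ γ.form ≫ DC.P.map p) = 0 := by
    rw [← hDCα, ← hwnatα, ← Category.assoc, ← hαsymm]
    simpa [Category.assoc] using hknown
  have hwDC : R.wC (DC.obj (R.jq.F.obj x)) = 0 := by
    have h6 : DC.P.χ (R.jq.F.obj x) ≫ R.wC (DC.obj (R.jq.F.obj x)) ≫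
        inv (DC.P.χ (R.jq.F.obj x)) = 0 := by
      rw [← cancel_mono (p ≫ γ.form ≫ DC.P.map p), zero_comp]
      simpa [Category.assoc] using hz1
    have h8 : R.wC (DC.obj (R.jq.F.obj x)) = inv (DC.P.χ (R.jq.F.obj x)) ≫
        (DC.P.χ (R.jq.F.obj x) ≫ R.wC (DC.obj (R.jq.F.obj x)) ≫
          inv (DC.P.χ (R.jq.F.obj x))) ≫ DC.P.χ (R.jq.F.obj x) := by simp
    rw [h8, h6, zero_comp, comp_zero]
  have hwy : R.wC (R.jq.F.obj x) = 0 := by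
    haveI : Epi (DC.P.map (p ≫ γ.form ≫ DC.P.map p)) := DC.epi_map_of_mono _ hαmono
    rw [← cancel_epi (DC.P.map (p ≫ γ.form ≫ DC.P.map p)), comp_zero, hwnatα, hwDC, zero_comp]
  -- the pairing of `p` with everything vanishes
  have hφp : (γ.form ≫ R.wC γ.carrier) ≫ DC.P.map p = 0 := by
    rw [Category.assoc, ← hwnatp, hwy]
    simp
  have hpφ : p ≫ (γ.form ≫ R.wC γ.carrier) = 0 := by
    rw [hφsymm0]
    rw [← Category.assoc, DC.P.χ_natural p, Category.assoc, ← DC.P.map_comp, hφp,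
      DC.P.map_zero, comp_zero]
  -- hence `jq (u ≫ θ) = 0`
  have h7 : (p ≫ R.adj3.unit.app γ.carrier) ≫
      (R.jq.F.map (R.jL.map γ.form ≫ (R.ζ γ.carrier).hom ≫ DB.P.map (R.μ.app γ.carrier)) ≫
        (R.jq.η (R.jL.obj γ.carrier)).hom) ≫ DC.P.map (R.adj3.unit.app γ.carrier) = 0 := by
    rw [Category.assoc, hφw]
    exact hpφ
  have hJuθ : (R.jq.F.map u ≫
      R.jq.F.map (R.jL.map γ.form ≫ (R.ζ γ.carrier).hom ≫ DB.P.map (R.μ.app γ.carrier))) ≫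
      (R.jq.η (R.jL.obj γ.carrier)).hom = 0 := by
    haveI : IsIso (DC.P.map (R.adj3.unit.app γ.carrier)) := DC.P.isIso_map _
    rw [← cancel_mono (DC.P.map (R.adj3.unit.app γ.carrier)), zero_comp]
    have h7' := h7
    rw [← hJu] at h7'
    simpa [Category.assoc] using h7'
  have hJuθ2 : R.jq.F.map (u ≫ R.jL.map γ.form ≫ (R.ζ γ.carrier).hom ≫
      DB.P.map (R.μ.app γ.carrier)) = 0 := by
    haveI : IsIso ((R.jq.η (R.jL.obj γ.carrier)).hom) := inferInstance
    rw [← cancel_mono ((R.jq.η (R.jL.obj γ.carrier)).hom), zero_comp,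
      R.jq.F.map_comp u (R.jL.map γ.form ≫ (R.ζ γ.carrier).hom ≫ DB.P.map (R.μ.app γ.carrier))]
    simpa [Category.assoc] using hJuθ
  -- symmetry of `θ`
  have hθsymm := R.extSymm γ
  -- transpose argument kills `θ ≫ DB.map u`
  have hgzero : (R.jL.map γ.form ≫ (R.ζ γ.carrier).hom ≫ DB.P.map (R.μ.app γ.carrier)) ≫
      DB.P.map u = 0 := by
    have hg : (R.jL.map γ.form ≫ (R.ζ γ.carrier).hom ≫ DB.P.map (R.μ.app γ.carrier)) ≫
        DB.P.map u = DB.P.χ (R.jL.obj γ.carrier) ≫ DB.P.map (u ≫ R.jL.map γ.form ≫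
          (R.ζ γ.carrier).hom ≫ DB.P.map (R.μ.app γ.carrier)) := by
      rw [DB.P.map_comp u (R.jL.map γ.form ≫ (R.ζ γ.carrier).hom ≫
        DB.P.map (R.μ.app γ.carrier)), ← reassoc_of% hθsymm]
      simp only [Category.assoc]
    have hDBuθ : R.jq.F.map (DB.P.map (u ≫ R.jL.map γ.form ≫ (R.ζ γ.carrier).hom ≫
        DB.P.map (R.μ.app γ.carrier))) = 0 := by
      haveI : IsIso ((R.jq.η x).hom) := inferInstance
      rw [← cancel_mono ((R.jq.η x).hom), zero_comp,
        R.jq.η_natural (u ≫ R.jL.map γ.form ≫ (R.ζ γ.carrier).hom ≫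
          DB.P.map (R.μ.app γ.carrier)), hJuθ2, DC.P.map_zero, comp_zero]
    apply (R.adj3.homEquiv γ.carrier (DB.obj x)).injective
    rw [Adjunction.homEquiv_unit, Adjunction.homEquiv_unit, hg,
      R.jq.F.map_comp (DB.P.χ (R.jL.obj γ.carrier)) (DB.P.map (u ≫ R.jL.map γ.form ≫
        (R.ζ γ.carrier).hom ≫ DB.P.map (R.μ.app γ.carrier))), hDBuθ, Functor.map_zero]
    simp
  -- conclude
  rw [hθsymm, ← Category.assoc, DB.P.χ_natural u, Category.assoc, ← DB.P.map_comp, hgzero,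
    DB.P.map_zero, comp_zero]

end ARecollement

end Stmt14Main

/-! ## Statement 14
Intermediate restriction and intermediate extension preserve anisotropy
(Lemma "anisotropy preserved"). -/

theorem stmt_14 {A₀ : Type u₁} {B₀ : Type u₂} {C₀ : Type u₃}
    [Category.{v₁} A₀] [Category.{v₂} B₀] [Category.{v₃} C₀]
    [Abelian A₀] [Abelian B₀] [Abelian C₀]
    (DA : Duality A₀) (DB : Duality B₀) (DC : Duality C₀)
    (R : ARecollement A₀ B₀ C₀ DA DB DC)
    (β : SymmForm DB.P) (hβ : Anisotropic β)
    (γ : SymmForm DC.P) (hγ : Anisotropic γ) :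
    Anisotropic (R.interRestr β) ∧ Anisotropic (R.interExt γ) := by
  constructor
  · exact SymmForm.anisotropic_reduceKernel (R.restrForm β)
      (fun x u hu h0 => R.restr_radical β hβ x u hu h0)
  · exact SymmForm.anisotropic_reduceKernel (R.extForm γ)
      (fun x u hu h0 => R.ext_radical γ hγ x u hu h0)
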